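/- Let T be a tree on n vertices, L_T its combinatorial Laplacian, and for z ∈ C, z ≠ 0, let L^{z,1/z}_T be the q,t-Laplacian with weights q = z, t = 1/z (weighted adjacency with z on one direction of each edge, 1/z on the other, diagonal entries 1 + (deg(i)-1)). Then for every partition λ ⊢ n, the immanantal polynomials coincide: d_λ(xI - L^{z,1/z}_T) = d_λ(xI - L_T) as polynomials in x. -/

import Mathlib

open Finset Polynomial

/-- Irreducible character of `Sₙ` indexed by the partition `lam`, via the
Frobenius character formula. -/
noncomputable def chiPart (n : ℕ) (lam : Fin n → ℕ) (σ : Equiv.Perm (Fin n)) : ℤ :=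
  MvPolynomial.coeff (Finsupp.equivFunOnFinite.symm fun i => lam i + (n - 1 - (i : ℕ)))
    ((∏ i : Fin n, ∏ j ∈ Finset.univ.filter (fun j => i < j),
        (MvPolynomial.X i - MvPolynomial.X j : MvPolynomial (Fin n) ℤ)) *
      ((σ.cycleType.map fun c =>
          ∑ i : Fin n, (MvPolynomial.X i : MvPolynomial (Fin n) ℤ) ^ c).prod *
        (∑ i : Fin n, (MvPolynomial.X i : MvPolynomial (Fin n) ℤ)) ^ (n - σ.cycleType.sum)))

noncomputable def imman {n : ℕ} {R : Type*} [CommRing R] (χ : Equiv.Perm (Fin n) → R)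
    (A : Matrix (Fin n) (Fin n) R) : R :=
  ∑ σ : Equiv.Perm (Fin n), χ σ * ∏ i, A i (σ i)


namespace TreeImm

variable {V : Type*} {G : SimpleGraph V}

/-- Product of edge weights along the darts of a walk. -/
noncomputable def wprod (w : V → V → ℂ) {a b : V} (p : G.Walk a b) : ℂ :=
  (p.darts.map fun d => w d.toProd.1 d.toProd.2).prod

lemma wprod_concat (w : V → V → ℂ) {a b c : V} (p : G.Walk a b) (h : G.Adj b c) :
    wprod w (p.concat h) = wprod w p * w b c := by
  simp [wprod, SimpleGraph.Walk.darts_concat]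

lemma wprod_append (w : V → V → ℂ) {a b c : V} (p : G.Walk a b) (q : G.Walk b c) :
    wprod w (p.append q) = wprod w p * wprod w q := by
  simp [wprod, SimpleGraph.Walk.darts_append]

lemma wprod_ne_zero (w : V → V → ℂ) {a b : V} (p : G.Walk a b)
    (hw : ∀ u v, G.Adj u v → w u v ≠ 0) : wprod w p ≠ 0 := by
  refine List.prod_ne_zero fun h0 => ?_
  obtain ⟨d, hd, hd0⟩ := List.mem_map.mp h0
  exact hw _ _ d.adj hd0

lemma exists_potential {n : ℕ} (G : SimpleGraph (Fin n)) [DecidableRel G.Adj]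
    (hG : G.IsTree) (z : ℂ) (hz : z ≠ 0) (w : Fin n → Fin n → ℂ)
    (hw : ∀ u v, G.Adj u v →
      (w u v = z ∧ w v u = z⁻¹) ∨ (w u v = z⁻¹ ∧ w v u = z)) :
    ∃ ψ : Fin n → ℂ, (∀ v, ψ v ≠ 0) ∧ ∀ u v, G.Adj u v → w u v * ψ u = ψ v := by
  have hw0 : ∀ u v, G.Adj u v → w u v ≠ 0 := by
    intro u v h
    rcases hw u v h with ⟨h1, _⟩ | ⟨h1, _⟩ <;> simp [h1, hz]
  have hw1 : ∀ u v, G.Adj u v → w u v * w v u = 1 := by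
    intro u v h
    rcases hw u v h with ⟨h1, h2⟩ | ⟨h1, h2⟩ <;>
      simp [h1, h2, mul_inv_cancel₀ hz, inv_mul_cancel₀ hz]
  have hne : Nonempty (Fin n) := hG.isConnected.nonempty
  obtain ⟨r⟩ := hne
  have hup := hG.existsUnique_path
  -- unique path from r to v
  let pth : ∀ v, G.Walk r v := fun v => (hup r v).choose
  have pth_path : ∀ v, (pth v).IsPath := fun v => (hup r v).choose_spec.1
  have pth_uniq : ∀ v (q : G.Walk r v), q.IsPath → q = pth v := fun v q hq =>
    ((hup r v).choose_spec.2 q hq)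
  refine ⟨fun v => wprod w (pth v), fun v => wprod_ne_zero w _ hw0, ?_⟩
  intro u v huv
  by_cases hv : v ∈ (pth u).support
  · -- pth u = (pth u).takeUntil v ++ (pth u).dropUntil v, dropUntil = single edge v u
    have hdrop : ((pth u).dropUntil v hv).IsPath := (pth_path u).dropUntil hv
    have htake : ((pth u).takeUntil v hv).IsPath := (pth_path u).takeUntil hv
    have hedge : (SimpleGraph.Walk.cons huv.symm SimpleGraph.Walk.nil : G.Walk v u).IsPath :=
      SimpleGraph.Walk.IsPath.nil.cons (by simp [huv.ne'])
    have hequ : (pth u).dropUntil v hv =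
        SimpleGraph.Walk.cons huv.symm SimpleGraph.Walk.nil := by
      have := hG.IsAcyclic.path_unique ⟨_, hdrop⟩ ⟨_, hedge⟩
      exact congrArg Subtype.val this
    have htakeq : (pth u).takeUntil v hv = pth v := pth_uniq v _ htake
    have hspec := SimpleGraph.Walk.take_spec (pth u) hv
    have : wprod w (pth u) = wprod w (pth v) * w v u := by
      rw [← hspec, wprod_append, htakeq, hequ]
      simp [wprod]
    show w u v * wprod w (pth u) = wprod w (pth v)
    rw [this, ← mul_assoc, mul_comm (w u v) (wprod w (pth v)), mul_assoc, hw1 u v huv, mul_one]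
  · have hconcat : ((pth u).concat huv).IsPath := by
      rw [SimpleGraph.Walk.isPath_def, SimpleGraph.Walk.support_concat]
      rw [List.nodup_append]
      refine ⟨(pth_path u).support_nodup, List.nodup_singleton v, ?_⟩
      intro x hx y hxv hxy
      simp only [List.mem_singleton] at hxv
      subst hxv hxy
      exact hv hx
    have h2 := pth_uniq v _ hconcat
    show w u v * wprod w (pth u) = wprod w (pth v)
    rw [← h2, wprod_concat]
    ring

end TreeImm

/-- For a tree `T`, nonzero `z ∈ ℂ`, and the `q,t`-Laplacian with weights
`q = z`, `t = 1/z` (weight `z` on one direction of each edge and `z⁻¹` on the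
other, diagonal entries `1 + z z⁻¹ (deg i - 1)`), the immanantal polynomial
`d_λ(xI - L^{z,1/z}_T)` coincides with `d_λ(xI - L_T)` for every partition
`λ ⊢ n`, where `L_T` is the combinatorial Laplacian. -/
theorem immanantal_poly_z_invz {n : ℕ} (G : SimpleGraph (Fin n)) [DecidableRel G.Adj]
    (hG : G.IsTree) (z : ℂ) (hz : z ≠ 0)
    (w : Fin n → Fin n → ℂ)
    (hw : ∀ u v, G.Adj u v →
      (w u v = z ∧ w v u = z⁻¹) ∨ (w u v = z⁻¹ ∧ w v u = z))
    (lam : Fin n → ℕ) (hlam : Antitone lam) (hsum : ∑ i, lam i = n) :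
    imman (fun σ => ((chiPart n lam σ : ℤ) : Polynomial ℂ))
        (Matrix.scalar (Fin n) (X : Polynomial ℂ)
          - (Matrix.of fun i j =>
              if i = j then 1 + z * z⁻¹ * ((G.degree i : ℂ) - 1)
              else if G.Adj i j then -(w i j) else 0).map Polynomial.C)
      = imman (fun σ => ((chiPart n lam σ : ℤ) : Polynomial ℂ))
          (Matrix.scalar (Fin n) (X : Polynomial ℂ)
            - (Matrix.of fun i j =>
                if i = j then (G.degree i : ℂ)
                else if G.Adj i j then -1 else 0).map Polynomial.C) := by
  obtain ⟨ψ, hψ0, hψ⟩ := TreeImm.exists_potential G hG z hz w hw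
  have hzz : z * z⁻¹ = 1 := mul_inv_cancel₀ hz
  set A1 : Matrix (Fin n) (Fin n) (Polynomial ℂ) :=
    Matrix.scalar (Fin n) (X : Polynomial ℂ)
      - (Matrix.of fun i j =>
          if i = j then 1 + z * z⁻¹ * ((G.degree i : ℂ) - 1)
          else if G.Adj i j then -(w i j) else 0).map Polynomial.C with hA1
  set A2 : Matrix (Fin n) (Fin n) (Polynomial ℂ) :=
    Matrix.scalar (Fin n) (X : Polynomial ℂ)
      - (Matrix.of fun i j =>
          if i = j then (G.degree i : ℂ)
          else if G.Adj i j then -1 else 0).map Polynomial.C with hA2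
  have hdiag : ∀ i, A1 i i = A2 i i := by
    intro i
    have hd : (1 : ℂ) + z * z⁻¹ * ((G.degree i : ℂ) - 1) = (G.degree i : ℂ) := by
      rw [hzz]; ring
    simp [hA1, hA2, Matrix.sub_apply, Matrix.scalar_apply, Matrix.diagonal_apply_eq,
      Matrix.map_apply, Matrix.of_apply, hd]
  have hoff1 : ∀ i j, i ≠ j → G.Adj i j → A1 i j = C (w i j) := by
    intro i j hij hadj
    simp [hA1, Matrix.sub_apply, Matrix.scalar_apply, Matrix.diagonal_apply_ne _ hij,
      Matrix.map_apply, hij, hadj]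
  have hoff2 : ∀ i j, i ≠ j → G.Adj i j → A2 i j = 1 := by
    intro i j hij hadj
    simp [hA2, Matrix.sub_apply, Matrix.scalar_apply, Matrix.diagonal_apply_ne _ hij,
      Matrix.map_apply, hij, hadj]
  have hzero : ∀ i j, i ≠ j → ¬ G.Adj i j → A1 i j = 0 ∧ A2 i j = 0 := by
    intro i j hij hadj
    constructor <;>
      simp [hA1, hA2, Matrix.sub_apply, Matrix.scalar_apply, Matrix.diagonal_apply_ne _ hij,
        Matrix.map_apply, hij, hadj]
  unfold imman
  refine Finset.sum_congr rfl fun σ _ => ?_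
  congr 1
  by_cases hbad : ∀ i, σ i ≠ i → G.Adj i (σ i)
  · rw [← Finset.prod_filter_mul_prod_filter_not Finset.univ (fun i => σ i = i)
        (fun i => A1 i (σ i)),
      ← Finset.prod_filter_mul_prod_filter_not Finset.univ (fun i => σ i = i)
        (fun i => A2 i (σ i))]
    congr 1
    · refine Finset.prod_congr rfl fun i hi => ?_
      rw [Finset.mem_filter] at hi
      rw [hi.2, hdiag]
    · set S := Finset.univ.filter (fun i => ¬ σ i = i) with hS
      have hmemS : ∀ i, i ∈ S ↔ σ i ≠ i := by
        intro i; simp [hS]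
      have h1 : ∏ i ∈ S, A1 i (σ i) = C (∏ i ∈ S, w i (σ i)) := by
        rw [map_prod]
        refine Finset.prod_congr rfl fun i hi => ?_
        have hne : σ i ≠ i := (hmemS i).mp hi
        exact hoff1 i (σ i) (Ne.symm hne) (hbad i hne)
      have h2 : ∏ i ∈ S, A2 i (σ i) = 1 := by
        rw [Finset.prod_eq_one]
        intro i hi
        have hne : σ i ≠ i := (hmemS i).mp hi
        exact hoff2 i (σ i) (Ne.symm hne) (hbad i hne)
      have hw1 : ∏ i ∈ S, w i (σ i) = 1 := by
        have hval : ∀ i ∈ S, w i (σ i) = ψ (σ i) * (ψ i)⁻¹ := by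
          intro i hi
          have hne : σ i ≠ i := (hmemS i).mp hi
          have := hψ i (σ i) (hbad i hne)
          field_simp [hψ0 i] at this ⊢
          linear_combination this
        rw [Finset.prod_congr rfl hval, Finset.prod_mul_distrib, Finset.prod_inv_distrib]
        have hperm : ∏ i ∈ S, ψ (σ i) = ∏ i ∈ S, ψ i := by
          refine Finset.prod_bij (fun i _ => σ i) ?_ ?_ ?_ ?_
          · intro a ha
            rw [hmemS] at ha ⊢
            intro h
            exact ha (σ.injective h)
          · intro a _ b _ h
            exact σ.injective h
          · intro b hb
            refine ⟨σ⁻¹ b, ?_, by simp⟩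
            rw [hmemS] at hb ⊢
            intro h
            apply hb
            nth_rewrite 1 [show b = σ⁻¹ b by simpa using h]
            simp
          · intro a _; rfl
        rw [hperm, mul_inv_cancel₀]
        exact Finset.prod_ne_zero_iff.mpr fun i _ => hψ0 i
      rw [h1, h2, hw1, map_one]
  · push_neg at hbad
    obtain ⟨i, hne, hadj⟩ := hbad
    have hz1 : A1 i (σ i) = 0 := (hzero i (σ i) (Ne.symm hne) hadj).1
    have hz2 : A2 i (σ i) = 0 := (hzero i (σ i) (Ne.symm hne) hadj).2
    rw [Finset.prod_eq_zero (Finset.mem_univ i) hz1,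
      Finset.prod_eq_zero (Finset.mem_univ i) hz2]
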